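/- For fixed μ, ν ∈ ℝ, the map ρ ↦ Φ₂(μ,ν;ρ) is strictly increasing on (-1,1). -/

import Mathlib

open MeasureTheory Real Set Filter

noncomputable def stdPdf (x : ℝ) : ℝ := (Real.sqrt (2 * Real.pi))⁻¹ * Real.exp (-(x ^ 2) / 2)

noncomputable def stdCdf (x : ℝ) : ℝ := ∫ v in Set.Iio x, stdPdf v

noncomputable def Phi2 (μ ν ρ : ℝ) : ℝ :=
  ∫ v in Set.Iio μ, stdCdf ((ν - ρ * v) / Real.sqrt (1 - ρ ^ 2)) * stdPdf v

noncomputable def phi2 (μ ν ρ : ℝ) : ℝ :=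
  (2 * Real.pi * Real.sqrt (1 - ρ ^ 2))⁻¹ *
    Real.exp (-(μ ^ 2 - 2 * ρ * μ * ν + ν ^ 2) / (2 * (1 - ρ ^ 2)))

/-! ### Basic facts about `stdPdf` and `stdCdf` -/

lemma stdPdf_nonneg (x : ℝ) : 0 ≤ stdPdf x := by
  unfold stdPdf; positivity

lemma stdPdf_le (x : ℝ) : stdPdf x ≤ (Real.sqrt (2 * Real.pi))⁻¹ := by
  unfold stdPdf
  have h : Real.exp (-(x ^ 2) / 2) ≤ 1 := by
    rw [Real.exp_le_one_iff]; nlinarith [sq_nonneg x]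
  nlinarith [Real.sqrt_nonneg (2 * Real.pi), inv_nonneg.2 (Real.sqrt_nonneg (2 * Real.pi))]

lemma stdPdf_continuous : Continuous stdPdf := by
  unfold stdPdf; fun_prop

lemma stdPdf_integrable : Integrable stdPdf := by
  have h : Integrable fun x : ℝ => Real.exp (-(1/2 : ℝ) * x ^ 2) :=
    integrable_exp_neg_mul_sq (by norm_num)
  have e : stdPdf = fun x => (Real.sqrt (2 * Real.pi))⁻¹ * Real.exp (-(1/2 : ℝ) * x ^ 2) := by
    funext x; unfold stdPdf; ring_nf
  rw [e]; exact h.const_mul _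

lemma stdCdf_nonneg (x : ℝ) : 0 ≤ stdCdf x :=
  setIntegral_nonneg measurableSet_Iio fun v _ => stdPdf_nonneg v

lemma stdCdf_le (x : ℝ) : stdCdf x ≤ ∫ v, stdPdf v :=
  setIntegral_le_integral stdPdf_integrable (Filter.Eventually.of_forall fun v => stdPdf_nonneg v)

lemma stdCdf_eq (y : ℝ) : stdCdf y = stdCdf 0 + ∫ t in (0:ℝ)..y, stdPdf t := by
  have h := intervalIntegral.integral_Iic_sub_Iic (μ := volume) (f := stdPdf)
    stdPdf_integrable.integrableOn stdPdf_integrable.integrableOn (a := 0) (b := y)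
  unfold stdCdf
  rw [← MeasureTheory.integral_Iic_eq_integral_Iio, ← MeasureTheory.integral_Iic_eq_integral_Iio]
  linarith [h]

lemma stdCdf_hasDerivAt (x : ℝ) : HasDerivAt stdCdf (stdPdf x) x := by
  have h : HasDerivAt (fun u => ∫ t in (0:ℝ)..u, stdPdf t) (stdPdf x) x :=
    intervalIntegral.integral_hasDerivAt_right
      stdPdf_integrable.intervalIntegrable
      stdPdf_continuous.aestronglyMeasurable.stronglyMeasurableAtFilter
      stdPdf_continuous.continuousAt
  have h2 : HasDerivAt (fun u => stdCdf 0 + ∫ t in (0:ℝ)..u, stdPdf t) (stdPdf x) x :=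
    h.const_add _
  convert h2 using 1
  funext y
  exact stdCdf_eq y

lemma stdCdf_continuous : Continuous stdCdf :=
  continuous_iff_continuousAt.2 fun x => (stdCdf_hasDerivAt x).continuousAt

/-! ### Derivative in ρ of the inner function -/

lemma inner_hasDerivAt (ν v ρ : ℝ) (hρ : ρ ∈ Set.Ioo (-1:ℝ) 1) :
    HasDerivAt (fun ρ => (ν - ρ * v) / Real.sqrt (1 - ρ ^ 2))
      ((ρ * ν - v) / (Real.sqrt (1 - ρ ^ 2)) ^ 3) ρ := by
  obtain ⟨h1, h2⟩ := hρ
  have hpos : (0:ℝ) < 1 - ρ ^ 2 := by nlinarith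
  have hs : (0:ℝ) < Real.sqrt (1 - ρ ^ 2) := Real.sqrt_pos.2 hpos
  have hsq : Real.sqrt (1 - ρ ^ 2) ^ 2 = 1 - ρ ^ 2 := Real.sq_sqrt hpos.le
  have hnum : HasDerivAt (fun ρ : ℝ => ν - ρ * v) (-v) ρ := by
    simpa using ((hasDerivAt_id ρ).mul_const v).const_sub ν
  have hinner : HasDerivAt (fun ρ : ℝ => 1 - ρ ^ 2) (-(2 * ρ)) ρ := by
    simpa using (hasDerivAt_pow 2 ρ).const_sub 1
  have hden : HasDerivAt (fun ρ : ℝ => Real.sqrt (1 - ρ ^ 2))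
      (1 / (2 * Real.sqrt (1 - ρ ^ 2)) * -(2 * ρ)) ρ :=
    (Real.hasDerivAt_sqrt hpos.ne').comp ρ hinner
  have key := hnum.fun_div hden hs.ne'
  refine HasDerivAt.congr_deriv key (Eq.symm ?_)
  set s := Real.sqrt (1 - ρ ^ 2) with hsdef
  clear_value s
  field_simp
  ring_nf
  linear_combination v * hsq

/-! ### The antiderivative in `v` of the ρ-derivative of the integrand -/

noncomputable def antiD (ν ρ v : ℝ) : ℝ :=
  (2 * Real.pi * Real.sqrt (1 - ρ ^ 2))⁻¹ *
    Real.exp (-(v ^ 2 - 2 * ρ * ν * v + ν ^ 2) / (2 * (1 - ρ ^ 2)))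

lemma antiD_hasDerivAt (ν ρ : ℝ) (hρ : ρ ∈ Set.Ioo (-1:ℝ) 1) (v : ℝ) :
    HasDerivAt (antiD ν ρ)
      (stdPdf ((ν - ρ * v) / Real.sqrt (1 - ρ ^ 2)) *
        ((ρ * ν - v) / (Real.sqrt (1 - ρ ^ 2)) ^ 3) * stdPdf v) v := by
  obtain ⟨h1, h2⟩ := hρ
  have hpos : (0:ℝ) < 1 - ρ ^ 2 := by nlinarith
  have hs : (0:ℝ) < Real.sqrt (1 - ρ ^ 2) := Real.sqrt_pos.2 hpos
  have hsq : Real.sqrt (1 - ρ ^ 2) ^ 2 = 1 - ρ ^ 2 := Real.sq_sqrt hpos.le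
  have h2π : Real.sqrt (2 * Real.pi) ^ 2 = 2 * Real.pi :=
    Real.sq_sqrt (by positivity)
  have hE : HasDerivAt (fun v : ℝ => -(v ^ 2 - 2 * ρ * ν * v + ν ^ 2) / (2 * (1 - ρ ^ 2)))
      (-(2 * v - 2 * ρ * ν) / (2 * (1 - ρ ^ 2))) v := by
    have p1 : HasDerivAt (fun v : ℝ => v ^ 2 - 2 * ρ * ν * v + ν ^ 2)
        (2 * v - 2 * ρ * ν) v := by
      have := ((hasDerivAt_pow 2 v).sub (((hasDerivAt_id v).const_mul (2 * ρ * ν)))).add_const (ν ^ 2)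
      simpa [mul_comm] using this
    simpa using (p1.neg).div_const (2 * (1 - ρ ^ 2))
  have key := (hE.exp).const_mul ((2 * Real.pi * Real.sqrt (1 - ρ ^ 2))⁻¹)
  have heq : antiD ν ρ = fun v => (2 * Real.pi * Real.sqrt (1 - ρ ^ 2))⁻¹ *
      Real.exp (-(v ^ 2 - 2 * ρ * ν * v + ν ^ 2) / (2 * (1 - ρ ^ 2))) := rfl
  rw [heq]
  refine HasDerivAt.congr_deriv key (Eq.symm ?_)
  unfold stdPdf
  set s := Real.sqrt (1 - ρ ^ 2) with hsdef
  clear_value s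
  set t := Real.sqrt (2 * Real.pi) with htdef
  clear_value t
  have ht : (0:ℝ) < t := by rw [htdef]; exact Real.sqrt_pos.2 (by positivity)
  have hπ : (0:ℝ) < Real.pi := Real.pi_pos
  set A := Real.exp (-((ν - ρ * v) / s) ^ 2 / 2) with hA
  set B := Real.exp (-v ^ 2 / 2) with hB
  set X := Real.exp (-(v ^ 2 - 2 * ρ * ν * v + ν ^ 2) / (2 * (1 - ρ ^ 2))) with hX
  have hprod : A * B = X := by
    rw [hA, hB, hX, ← Real.exp_add]
    congr 1
    rw [div_pow, hsq]
    field_simp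
    ring
  rw [← hprod, ← h2π, ← hsq]
  field_simp
  ring

lemma phi2_pos (μ ν ρ : ℝ) (hρ : ρ ∈ Set.Ioo (-1:ℝ) 1) : 0 < phi2 μ ν ρ := by
  obtain ⟨h1, h2⟩ := hρ
  have hpos : (0:ℝ) < 1 - ρ ^ 2 := by nlinarith
  have hs : (0:ℝ) < Real.sqrt (1 - ρ ^ 2) := Real.sqrt_pos.2 hpos
  unfold phi2
  have := Real.pi_pos
  positivity

lemma antiD_tendsto (ν ρ : ℝ) (hρ : ρ ∈ Set.Ioo (-1:ℝ) 1) :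
    Tendsto (antiD ν ρ) atBot (nhds 0) := by
  obtain ⟨h1, h2⟩ := hρ
  have hpos : (0:ℝ) < 1 - ρ ^ 2 := by nlinarith
  have hq : Tendsto (fun v : ℝ => v ^ 2 - 2 * ρ * ν * v + ν ^ 2) atBot atTop := by
    have e : (fun v : ℝ => v ^ 2 - 2 * ρ * ν * v + ν ^ 2)
        = fun v => (-(v - ρ * ν)) ^ 2 + (ν ^ 2 - (ρ * ν) ^ 2) := by
      funext v; ring
    rw [e]
    apply tendsto_atTop_add_const_right
    exact (tendsto_pow_atTop (two_ne_zero)).comp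
      (tendsto_neg_atBot_atTop.comp (tendsto_atBot_add_const_right _ _ tendsto_id))
  have hE : Tendsto (fun v : ℝ => -(v ^ 2 - 2 * ρ * ν * v + ν ^ 2) / (2 * (1 - ρ ^ 2)))
      atBot atBot := by
    have e2 : (fun v : ℝ => -(v ^ 2 - 2 * ρ * ν * v + ν ^ 2) / (2 * (1 - ρ ^ 2)))
        = fun v => (v ^ 2 - 2 * ρ * ν * v + ν ^ 2) * (-(2 * (1 - ρ ^ 2))⁻¹) := by
      funext v; field_simp
    rw [e2]
    exact (tendsto_mul_const_atBot_of_neg (neg_lt_zero.mpr (by positivity))).2 hq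
  have := (Real.tendsto_exp_atBot.comp hE).const_mul
    ((2 * Real.pi * Real.sqrt (1 - ρ ^ 2))⁻¹)
  simp only [Function.comp_def, mul_zero] at this
  exact this

/-! ### Bounds and integrability -/

lemma bound_integrable (ν : ℝ) : Integrable (fun v => (|ν| + |v|) * stdPdf v) := by
  have h1 : Integrable (fun v : ℝ => |ν| * stdPdf v) := stdPdf_integrable.const_mul _
  have h2 : Integrable (fun v : ℝ => |v| * stdPdf v) := by
    have base : Integrable (fun v : ℝ => v * Real.exp (-(1/2 : ℝ) * v ^ 2)) :=
      integrable_mul_exp_neg_mul_sq (by norm_num)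
    have habs := base.abs
    have := habs.const_mul ((Real.sqrt (2 * Real.pi))⁻¹)
    apply this.congr
    filter_upwards with v
    rw [abs_mul, abs_of_nonneg (Real.exp_nonneg _)]
    unfold stdPdf
    ring_nf
  have := h1.add h2
  apply this.congr
  filter_upwards with v
  simp only [Pi.add_apply]
  ring

lemma F'_bound (ν : ℝ) {δ : ℝ} (hδ : 0 < δ) (ρ v : ℝ) (h : δ ≤ 1 - ρ ^ 2) :
    |stdPdf ((ν - ρ * v) / Real.sqrt (1 - ρ ^ 2)) *
        ((ρ * ν - v) / (Real.sqrt (1 - ρ ^ 2)) ^ 3) * stdPdf v|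
      ≤ (Real.sqrt (2 * Real.pi))⁻¹ * (Real.sqrt δ * δ)⁻¹ * ((|ν| + |v|) * stdPdf v) := by
  have hpos : (0:ℝ) < 1 - ρ ^ 2 := lt_of_lt_of_le hδ h
  have hs : (0:ℝ) < Real.sqrt (1 - ρ ^ 2) := Real.sqrt_pos.2 hpos
  have hsq : Real.sqrt (1 - ρ ^ 2) ^ 2 = 1 - ρ ^ 2 := Real.sq_sqrt hpos.le
  have hρ1 : |ρ| ≤ 1 := by
    rw [abs_le]; constructor <;> nlinarith
  have hsd : Real.sqrt δ * δ ≤ (Real.sqrt (1 - ρ ^ 2)) ^ 3 := by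
    have h1 : Real.sqrt δ ≤ Real.sqrt (1 - ρ ^ 2) := Real.sqrt_le_sqrt h
    have h3 : (Real.sqrt (1 - ρ ^ 2)) ^ 3 = Real.sqrt (1 - ρ ^ 2) * (1 - ρ ^ 2) := by
      rw [pow_succ, hsq, mul_comm]
    rw [h3]
    have := Real.sqrt_nonneg δ
    nlinarith [Real.sqrt_nonneg (1 - ρ ^ 2)]
  have hnum : |ρ * ν - v| ≤ |ν| + |v| := by
    calc |ρ * ν - v| ≤ |ρ * ν| + |v| := abs_sub _ _
    _ ≤ |ν| + |v| := by
        rw [abs_mul]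
        have : |ρ| * |ν| ≤ 1 * |ν| := mul_le_mul_of_nonneg_right hρ1 (abs_nonneg ν)
        nlinarith [abs_nonneg ν]
  rw [abs_mul, abs_mul, abs_of_nonneg (stdPdf_nonneg _), abs_of_nonneg (stdPdf_nonneg _),
    abs_div, abs_of_nonneg (pow_nonneg hs.le 3)]
  have hsdpos : (0:ℝ) < Real.sqrt δ * δ := by positivity
  have hfrac : |ρ * ν - v| / (Real.sqrt (1 - ρ ^ 2)) ^ 3 ≤ (|ν| + |v|) / (Real.sqrt δ * δ) := by
    exact div_le_div₀ (by positivity) hnum hsdpos hsd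
  calc stdPdf ((ν - ρ * v) / Real.sqrt (1 - ρ ^ 2)) * (|ρ * ν - v| / Real.sqrt (1 - ρ ^ 2) ^ 3) * stdPdf v
      ≤ (Real.sqrt (2 * Real.pi))⁻¹ * ((|ν| + |v|) / (Real.sqrt δ * δ)) * stdPdf v := by
        apply mul_le_mul_of_nonneg_right _ (stdPdf_nonneg v)
        exact mul_le_mul (stdPdf_le _) hfrac (by positivity) (by positivity)
    _ = (Real.sqrt (2 * Real.pi))⁻¹ * (Real.sqrt δ * δ)⁻¹ * ((|ν| + |v|) * stdPdf v) := by
        rw [div_eq_mul_inv]; ring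

lemma F'_continuous (ν ρ : ℝ) :
    Continuous (fun v => stdPdf ((ν - ρ * v) / Real.sqrt (1 - ρ ^ 2)) *
        ((ρ * ν - v) / (Real.sqrt (1 - ρ ^ 2)) ^ 3) * stdPdf v) := by
  apply Continuous.mul _ stdPdf_continuous
  apply Continuous.mul
  · exact stdPdf_continuous.comp (by fun_prop)
  · fun_prop

lemma F'_integrable (ν ρ : ℝ) (hρ : ρ ∈ Set.Ioo (-1:ℝ) 1) :
    Integrable (fun v => stdPdf ((ν - ρ * v) / Real.sqrt (1 - ρ ^ 2)) *
        ((ρ * ν - v) / (Real.sqrt (1 - ρ ^ 2)) ^ 3) * stdPdf v) := by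
  obtain ⟨h1, h2⟩ := hρ
  have hpos : (0:ℝ) < 1 - ρ ^ 2 := by nlinarith
  apply Integrable.mono' (((bound_integrable ν).const_mul
    ((Real.sqrt (2 * Real.pi))⁻¹ * (Real.sqrt (1 - ρ ^ 2) * (1 - ρ ^ 2))⁻¹)))
    (F'_continuous ν ρ).aestronglyMeasurable
  filter_upwards with v
  rw [Real.norm_eq_abs]
  calc |stdPdf ((ν - ρ * v) / Real.sqrt (1 - ρ ^ 2)) *
        ((ρ * ν - v) / (Real.sqrt (1 - ρ ^ 2)) ^ 3) * stdPdf v|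
      ≤ (Real.sqrt (2 * Real.pi))⁻¹ * (Real.sqrt (1 - ρ ^ 2) * (1 - ρ ^ 2))⁻¹ *
        ((|ν| + |v|) * stdPdf v) := F'_bound ν hpos ρ v le_rfl
    _ = (Real.sqrt (2 * Real.pi))⁻¹ * (Real.sqrt (1 - ρ ^ 2) * (1 - ρ ^ 2))⁻¹ *
        ((|ν| + |v|) * stdPdf v) := rfl

/-! ### The value of the integral of the derivative: Plackett's identity -/

lemma integral_F' (μ ν ρ : ℝ) (hρ : ρ ∈ Set.Ioo (-1:ℝ) 1) :
    ∫ v in Set.Iio μ, stdPdf ((ν - ρ * v) / Real.sqrt (1 - ρ ^ 2)) *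
        ((ρ * ν - v) / (Real.sqrt (1 - ρ ^ 2)) ^ 3) * stdPdf v = phi2 μ ν ρ := by
  rw [← MeasureTheory.integral_Iic_eq_integral_Iio]
  rw [MeasureTheory.integral_Iic_of_hasDerivAt_of_tendsto'
    (fun x _ => antiD_hasDerivAt ν ρ hρ x)
    (F'_integrable ν ρ hρ).integrableOn
    (antiD_tendsto ν ρ hρ)]
  rw [sub_zero]
  unfold antiD phi2
  congr 2
  ring

/-! ### Differentiation under the integral sign -/

lemma Phi2_hasDerivAt (μ ν ρ₀ : ℝ) (hρ₀ : ρ₀ ∈ Set.Ioo (-1:ℝ) 1) :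
    HasDerivAt (fun ρ => Phi2 μ ν ρ) (phi2 μ ν ρ₀) ρ₀ := by
  obtain ⟨h1, h2⟩ := hρ₀
  have habs : |ρ₀| < 1 := abs_lt.2 ⟨h1, h2⟩
  set ε : ℝ := (1 - |ρ₀|) / 2 with hε
  have hεpos : 0 < ε := by simp only [hε]; linarith
  set r : ℝ := (1 + |ρ₀|) / 2 with hr
  have hr1 : r < 1 := by simp only [hr]; linarith
  have hrpos : 0 < r := by positivity
  set δ : ℝ := 1 - r ^ 2 with hδdef
  have hδ : 0 < δ := by simp only [hδdef]; nlinarith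
  have hball : ∀ x ∈ Metric.ball ρ₀ ε, δ ≤ 1 - x ^ 2 ∧ x ∈ Set.Ioo (-1:ℝ) 1 := by
    intro x hx
    rw [Metric.mem_ball, Real.dist_eq] at hx
    have hxr : |x| < r := by
      calc |x| ≤ |ρ₀| + |x - ρ₀| := by
            have := abs_sub_abs_le_abs_sub x ρ₀; linarith [abs_sub_abs_le_abs_sub x ρ₀]
        _ < |ρ₀| + ε := by linarith
        _ = r := by simp only [hε, hr]; ring
    have hx2 : x ^ 2 ≤ r ^ 2 := by
      have := abs_nonneg x
      have : x ^ 2 = |x| ^ 2 := (sq_abs x).symm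
      nlinarith [abs_nonneg x]
    constructor
    · simp only [hδdef]; linarith
    · have := abs_lt.1 (hxr.trans hr1); exact ⟨this.1, this.2⟩
  set C : ℝ := (Real.sqrt (2 * Real.pi))⁻¹ * (Real.sqrt δ * δ)⁻¹ with hC
  set M : ℝ := ∫ v, stdPdf v with hM
  have key := hasDerivAt_integral_of_dominated_loc_of_deriv_le
    (F := fun ρ v => stdCdf ((ν - ρ * v) / Real.sqrt (1 - ρ ^ 2)) * stdPdf v)
    (F' := fun ρ v => stdPdf ((ν - ρ * v) / Real.sqrt (1 - ρ ^ 2)) *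
        ((ρ * ν - v) / (Real.sqrt (1 - ρ ^ 2)) ^ 3) * stdPdf v)
    (μ := volume.restrict (Set.Iio μ)) (x₀ := ρ₀)
    (bound := fun v => C * ((|ν| + |v|) * stdPdf v)) (Metric.ball_mem_nhds ρ₀ hεpos)
    ?_ ?_ ?_ ?_ ?_ ?_
  · have := key.2
    rw [integral_F' μ ν ρ₀ ⟨h1, h2⟩] at this
    exact this
  · filter_upwards with x
    exact ((stdCdf_continuous.comp (by fun_prop)).mul stdPdf_continuous).aestronglyMeasurable.restrict
  · apply Integrable.mono' ((stdPdf_integrable.const_mul M).restrict)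
    · exact ((stdCdf_continuous.comp (by fun_prop)).mul stdPdf_continuous).aestronglyMeasurable.restrict
    · filter_upwards with v
      rw [Real.norm_eq_abs, abs_mul, abs_of_nonneg (stdCdf_nonneg _),
        abs_of_nonneg (stdPdf_nonneg _)]
      exact mul_le_mul_of_nonneg_right (stdCdf_le _) (stdPdf_nonneg v)
  · exact (F'_continuous ν ρ₀).aestronglyMeasurable.restrict
  · filter_upwards with v
    intro x hx
    obtain ⟨hδx, hxIoo⟩ := hball x hx
    rw [Real.norm_eq_abs]
    calc |stdPdf ((ν - x * v) / Real.sqrt (1 - x ^ 2)) *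
          ((x * ν - v) / (Real.sqrt (1 - x ^ 2)) ^ 3) * stdPdf v|
        ≤ (Real.sqrt (2 * Real.pi))⁻¹ * (Real.sqrt δ * δ)⁻¹ * ((|ν| + |v|) * stdPdf v) :=
          F'_bound ν hδ x v hδx
      _ = C * ((|ν| + |v|) * stdPdf v) := rfl
  · exact ((bound_integrable ν).const_mul C).restrict
  · filter_upwards with v
    intro x hx
    obtain ⟨hδx, hxIoo⟩ := hball x hx
    exact ((stdCdf_hasDerivAt _).comp x (inner_hasDerivAt ν v x hxIoo)).mul_const (stdPdf v)

theorem stmt2 (μ ν : ℝ) :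
    StrictMonoOn (fun ρ => Phi2 μ ν ρ) (Set.Ioo (-1 : ℝ) 1) := by
  apply strictMonoOn_of_deriv_pos (convex_Ioo _ _)
  · intro x hx
    exact (Phi2_hasDerivAt μ ν x hx).continuousAt.continuousWithinAt
  · intro x hx
    rw [interior_Ioo] at hx
    rw [(Phi2_hasDerivAt μ ν x hx).deriv]
    exact phi2_pos μ ν x hx
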